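/- Monotonicity of rule semantics: if η is an initial segment of ξ, then (1) if η is final for rule R in X, so is ξ; (2) if η succeeds for R, so does ξ; (3) if η fails for R, so does ξ; and (4) the update set produced by R under ξ includes the update set produced under η. -/

import Mathlib

/-- ASM-terms over an internal vocabulary F and an external vocabulary E
(no variables); arities are not tracked, arguments are lists. -/
inductive Term (F E : Type*) : Type _
  | func : F → List (Term F E) → Term F E
  | ext  : E → List (Term F E) → Term F E

/-- Value relation ⟦t⟧_X^ξ = a, relative to a state `X` (interpretation of the
internal symbols), a template assignment `tmpl`, and the answer function `ans`
of a history.  For an internal symbol the value is `X f` applied to the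
argument values; for an external symbol it is the reply `ans (tmpl e as)`
to the query `tmpl e as` (the q-value), when that query is answered. -/
inductive Val {A Q F E : Type*} (X : F → List A → A) (tmpl : E → List A → Q)
    (ans : Q → Option A) : Term F E → A → Prop
  | func {f : F} {ts : List (Term F E)} {as : List A} :
      ts.length = as.length →
      (∀ p ∈ ts.zip as, Val X tmpl ans p.1 p.2) →
      Val X tmpl ans (.func f ts) (X f as)
  | ext {e : E} {ts : List (Term F E)} {as : List A} {a : A} :
      ts.length = as.length →
      (∀ p ∈ ts.zip as, Val X tmpl ans p.1 p.2) →
      ans (tmpl e as) = some a →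
      Val X tmpl ans (.ext e ts) a

/-- q-value of a query-term: q-⟦f(t₁,…,tₙ)⟧ = f̂[a₁,…,aₙ]. -/
inductive QVal {A Q F E : Type*} (X : F → List A → A) (tmpl : E → List A → Q)
    (ans : Q → Option A) : Term F E → Q → Prop
  | mk {e : E} {ts : List (Term F E)} {as : List A} :
      ts.length = as.length →
      (∀ p ∈ ts.zip as, Val X tmpl ans p.1 p.2) →
      QVal X tmpl ans (.ext e ts) (tmpl e as)

/-- Causality relation ξ ⊢_X^t q : the queries caused by a term.  When some
argument lacks a value, the queries are those caused by the arguments; when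
all arguments of an external call have values and the resulting query is
unanswered, that query is caused. -/
inductive Causes {A Q F E : Type*} (X : F → List A → A) (tmpl : E → List A → Q)
    (ans : Q → Option A) : Term F E → Q → Prop
  | funcArg {f ts t' q} : t' ∈ ts → Causes X tmpl ans t' q →
      Causes X tmpl ans (.func f ts) q
  | extArg {e ts t' q} : t' ∈ ts → Causes X tmpl ans t' q →
      Causes X tmpl ans (.ext e ts) q
  | extQ {e : E} {ts : List (Term F E)} {as : List A} :
      ts.length = as.length →
      (∀ p ∈ ts.zip as, Val X tmpl ans p.1 p.2) →
      ans (tmpl e as) = none →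
      Causes X tmpl ans (.ext e ts) (tmpl e as)

/-- A history: a partial answer function together with a binary relation
(intended: a linear pre-order of its domain). -/
structure Hist (A Q : Type*) where
  ans : Q → Option A
  le : Q → Q → Prop

/-- ξ is a genuine history: `le` is a linear pre-order whose field is the
domain of the answer function. -/
def IsHistory {A Q : Type*} (ξ : Hist A Q) : Prop :=
  (∀ x y, ξ.le x y → ξ.ans x ≠ none ∧ ξ.ans y ≠ none) ∧
  (∀ x, ξ.ans x ≠ none → ξ.le x x) ∧
  (∀ x y z, ξ.le x y → ξ.le y z → ξ.le x z) ∧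
  (∀ x y, ξ.ans x ≠ none → ξ.ans y ≠ none → ξ.le x y ∨ ξ.le y x)

/-- η ⊴ ξ : η is the restriction of ξ to a downward-closed subset of dom ξ̇. -/
def InitSeg {A Q : Type*} (η ξ : Hist A Q) : Prop :=
  (∀ x, η.ans x ≠ none → η.ans x = ξ.ans x) ∧
  (∀ x y, ξ.le x y → η.ans y ≠ none → η.ans x ≠ none) ∧
  (∀ x y, η.le x y ↔ (ξ.le x y ∧ η.ans x ≠ none ∧ η.ans y ≠ none))

/-- t has a defined value. -/
def HasVal {A Q F E : Type*} (X : F → List A → A) (tmpl : E → List A → Q)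
    (ans : Q → Option A) (t : Term F E) : Prop :=
  ∃ a, Val X tmpl ans t a

/-- Guards: Boolean terms, timing comparisons (s ⪯ t), and the Kleene
connectives ⋏, ⋎, ¬. -/
inductive Guard (F E : Type*) : Type _
  | tm : Term F E → Guard F E
  | timing : Term F E → Term F E → Guard F E
  | kand : Guard F E → Guard F E → Guard F E
  | kor : Guard F E → Guard F E → Guard F E
  | knot : Guard F E → Guard F E

/-- A Boolean term: its value (under any history) is always one of the two
designated truth elements. -/
def IsBooleanTerm {A Q F E : Type*} (X : F → List A → A) (tmpl : E → List A → Q)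
    (tval fval : A) (t : Term F E) : Prop :=
  ∀ (ans : Q → Option A) (a : A), Val X tmpl ans t a → a = tval ∨ a = fval

/-- A guard all of whose atomic term constituents are Boolean terms. -/
inductive GoodGuard {A Q F E : Type*} (X : F → List A → A) (tmpl : E → List A → Q)
    (tval fval : A) : Guard F E → Prop
  | tm {t} : IsBooleanTerm X tmpl tval fval t → GoodGuard X tmpl tval fval (.tm t)
  | timing {s t} : GoodGuard X tmpl tval fval (.timing s t)
  | kand {φ ψ} : GoodGuard X tmpl tval fval φ → GoodGuard X tmpl tval fval ψ →
      GoodGuard X tmpl tval fval (.kand φ ψ)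
  | kor {φ ψ} : GoodGuard X tmpl tval fval φ → GoodGuard X tmpl tval fval ψ →
      GoodGuard X tmpl tval fval (.kor φ ψ)
  | knot {φ} : GoodGuard X tmpl tval fval φ → GoodGuard X tmpl tval fval (.knot φ)

/-- Truth-value semantics of guards ⟦φ⟧_X^ξ, in Kleene's strong
three-valued logic; a timing guard (s ⪯ t) is true if s has a value and t
does not, or if both have values and every initial segment giving t a value
also gives s one; dually for falsity. -/
inductive GVal {A Q F E : Type*} (X : F → List A → A) (tmpl : E → List A → Q)
    (tval fval : A) (ξ : Hist A Q) : Guard F E → Bool → Prop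
  | tmT {t} : Val X tmpl ξ.ans t tval → GVal X tmpl tval fval ξ (.tm t) true
  | tmF {t} : Val X tmpl ξ.ans t fval → GVal X tmpl tval fval ξ (.tm t) false
  | timingT₁ {s t} : HasVal X tmpl ξ.ans s → ¬ HasVal X tmpl ξ.ans t →
      GVal X tmpl tval fval ξ (.timing s t) true
  | timingT₂ {s t} : HasVal X tmpl ξ.ans s → HasVal X tmpl ξ.ans t →
      (∀ η, IsHistory η → InitSeg η ξ → HasVal X tmpl η.ans t → HasVal X tmpl η.ans s) →
      GVal X tmpl tval fval ξ (.timing s t) true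
  | timingF₁ {s t} : HasVal X tmpl ξ.ans t → ¬ HasVal X tmpl ξ.ans s →
      GVal X tmpl tval fval ξ (.timing s t) false
  | timingF₂ {s t} : HasVal X tmpl ξ.ans s → HasVal X tmpl ξ.ans t →
      (∃ η, IsHistory η ∧ InitSeg η ξ ∧ HasVal X tmpl η.ans t ∧ ¬ HasVal X tmpl η.ans s) →
      GVal X tmpl tval fval ξ (.timing s t) false
  | kandT {φ ψ} : GVal X tmpl tval fval ξ φ true → GVal X tmpl tval fval ξ ψ true →
      GVal X tmpl tval fval ξ (.kand φ ψ) true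
  | kandF₀ {φ ψ} : GVal X tmpl tval fval ξ φ false → GVal X tmpl tval fval ξ (.kand φ ψ) false
  | kandF₁ {φ ψ} : GVal X tmpl tval fval ξ ψ false → GVal X tmpl tval fval ξ (.kand φ ψ) false
  | korF {φ ψ} : GVal X tmpl tval fval ξ φ false → GVal X tmpl tval fval ξ ψ false →
      GVal X tmpl tval fval ξ (.kor φ ψ) false
  | korT₀ {φ ψ} : GVal X tmpl tval fval ξ φ true → GVal X tmpl tval fval ξ (.kor φ ψ) true
  | korT₁ {φ ψ} : GVal X tmpl tval fval ξ ψ true → GVal X tmpl tval fval ξ (.kor φ ψ) true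
  | knot {φ b} : GVal X tmpl tval fval ξ φ b → GVal X tmpl tval fval ξ (.knot φ) (!b)

/-- Queries caused by a guard, ξ ⊢_X^φ q. -/
inductive GCauses {A Q F E : Type*} (X : F → List A → A) (tmpl : E → List A → Q)
    (tval fval : A) (ξ : Hist A Q) : Guard F E → Q → Prop
  | tm {t q} : Causes X tmpl ξ.ans t q → GCauses X tmpl tval fval ξ (.tm t) q
  | timingL {s t q} : ¬ HasVal X tmpl ξ.ans s → ¬ HasVal X tmpl ξ.ans t →
      Causes X tmpl ξ.ans s q → GCauses X tmpl tval fval ξ (.timing s t) q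
  | timingR {s t q} : ¬ HasVal X tmpl ξ.ans s → ¬ HasVal X tmpl ξ.ans t →
      Causes X tmpl ξ.ans t q → GCauses X tmpl tval fval ξ (.timing s t) q
  | kand₁ {φ ψ q} : GVal X tmpl tval fval ξ φ true → (¬ ∃ b, GVal X tmpl tval fval ξ ψ b) →
      GCauses X tmpl tval fval ξ ψ q → GCauses X tmpl tval fval ξ (.kand φ ψ) q
  | kand₂ {φ ψ q} : GVal X tmpl tval fval ξ ψ true → (¬ ∃ b, GVal X tmpl tval fval ξ φ b) →
      GCauses X tmpl tval fval ξ φ q → GCauses X tmpl tval fval ξ (.kand φ ψ) q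
  | kand₃l {φ ψ q} : (¬ ∃ b, GVal X tmpl tval fval ξ φ b) → (¬ ∃ b, GVal X tmpl tval fval ξ ψ b) →
      GCauses X tmpl tval fval ξ φ q → GCauses X tmpl tval fval ξ (.kand φ ψ) q
  | kand₃r {φ ψ q} : (¬ ∃ b, GVal X tmpl tval fval ξ φ b) → (¬ ∃ b, GVal X tmpl tval fval ξ ψ b) →
      GCauses X tmpl tval fval ξ ψ q → GCauses X tmpl tval fval ξ (.kand φ ψ) q
  | kor₁ {φ ψ q} : GVal X tmpl tval fval ξ φ false → (¬ ∃ b, GVal X tmpl tval fval ξ ψ b) →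
      GCauses X tmpl tval fval ξ ψ q → GCauses X tmpl tval fval ξ (.kor φ ψ) q
  | kor₂ {φ ψ q} : GVal X tmpl tval fval ξ ψ false → (¬ ∃ b, GVal X tmpl tval fval ξ φ b) →
      GCauses X tmpl tval fval ξ φ q → GCauses X tmpl tval fval ξ (.kor φ ψ) q
  | kor₃l {φ ψ q} : (¬ ∃ b, GVal X tmpl tval fval ξ φ b) → (¬ ∃ b, GVal X tmpl tval fval ξ ψ b) →
      GCauses X tmpl tval fval ξ φ q → GCauses X tmpl tval fval ξ (.kor φ ψ) q
  | kor₃r {φ ψ q} : (¬ ∃ b, GVal X tmpl tval fval ξ φ b) → (¬ ∃ b, GVal X tmpl tval fval ξ ψ b) →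
      GCauses X tmpl tval fval ξ ψ q → GCauses X tmpl tval fval ξ (.kor φ ψ) q
  | knot {φ q} : (¬ ∃ b, GVal X tmpl tval fval ξ φ b) →
      GCauses X tmpl tval fval ξ φ q → GCauses X tmpl tval fval ξ (.knot φ) q

/-- ASM rules: updates, issue rules, fail, conditionals and parallel
combinations. -/
inductive Rule (F E : Type*) : Type _
  | upd : F → List (Term F E) → Term F E → Rule F E
  | issue : E → List (Term F E) → Rule F E
  | fail : Rule F E
  | cond : Guard F E → Rule F E → Rule F E → Rule F E
  | par : List (Rule F E) → Rule F E

/-- A rule all of whose guards are built from Boolean terms. -/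
inductive GoodRule {A Q F E : Type*} (X : F → List A → A) (tmpl : E → List A → Q)
    (tval fval : A) : Rule F E → Prop
  | upd {f ts t0} : GoodRule X tmpl tval fval (.upd f ts t0)
  | issue {e ts} : GoodRule X tmpl tval fval (.issue e ts)
  | fail : GoodRule X tmpl tval fval .fail
  | cond {φ R0 R1} : GoodGuard X tmpl tval fval φ → GoodRule X tmpl tval fval R0 →
      GoodRule X tmpl tval fval R1 → GoodRule X tmpl tval fval (.cond φ R0 R1)
  | par {Rs} : (∀ R ∈ Rs, GoodRule X tmpl tval fval R) → GoodRule X tmpl tval fval (.par Rs)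

/-- ξ is a final history for rule R in state X. -/
inductive Final {A Q F E : Type*} (X : F → List A → A) (tmpl : E → List A → Q)
    (tval fval : A) (ξ : Hist A Q) : Rule F E → Prop
  | upd {f ts t0} : (∀ t ∈ t0 :: ts, HasVal X tmpl ξ.ans t) →
      Final X tmpl tval fval ξ (.upd f ts t0)
  | issue {e ts} : (∀ t ∈ ts, HasVal X tmpl ξ.ans t) →
      Final X tmpl tval fval ξ (.issue e ts)
  | fail : Final X tmpl tval fval ξ .fail
  | condT {φ R0 R1} : GVal X tmpl tval fval ξ φ true → Final X tmpl tval fval ξ R0 →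
      Final X tmpl tval fval ξ (.cond φ R0 R1)
  | condF {φ R0 R1} : GVal X tmpl tval fval ξ φ false → Final X tmpl tval fval ξ R1 →
      Final X tmpl tval fval ξ (.cond φ R0 R1)
  | par {Rs} : (∀ R ∈ Rs, Final X tmpl tval fval ξ R) → Final X tmpl tval fval ξ (.par Rs)

/-- Membership of an update ⟨f, ā, a₀⟩ in the update set produced by a rule. -/
inductive UpdSet {A Q F E : Type*} (X : F → List A → A) (tmpl : E → List A → Q)
    (tval fval : A) (ξ : Hist A Q) : Rule F E → F × List A × A → Prop
  | upd {f ts t0 as a0} : ts.length = as.length →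
      (∀ p ∈ ts.zip as, Val X tmpl ξ.ans p.1 p.2) → Val X tmpl ξ.ans t0 a0 →
      UpdSet X tmpl tval fval ξ (.upd f ts t0) (f, as, a0)
  | condT {φ R0 R1 u} : GVal X tmpl tval fval ξ φ true → UpdSet X tmpl tval fval ξ R0 u →
      UpdSet X tmpl tval fval ξ (.cond φ R0 R1) u
  | condF {φ R0 R1 u} : GVal X tmpl tval fval ξ φ false → UpdSet X tmpl tval fval ξ R1 u →
      UpdSet X tmpl tval fval ξ (.cond φ R0 R1) u
  | par {Rs R u} : R ∈ Rs → UpdSet X tmpl tval fval ξ R u →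
      UpdSet X tmpl tval fval ξ (.par Rs) u

/-- A clash: two distinct updates of the same location in the update set. -/
def Clash {A Q F E : Type*} (X : F → List A → A) (tmpl : E → List A → Q)
    (tval fval : A) (ξ : Hist A Q) (R : Rule F E) : Prop :=
  ∃ f as a a', UpdSet X tmpl tval fval ξ R (f, as, a) ∧
    UpdSet X tmpl tval fval ξ R (f, as, a') ∧ a ≠ a'

/-- ξ fails for R in X. -/
inductive Fails {A Q F E : Type*} (X : F → List A → A) (tmpl : E → List A → Q)
    (tval fval : A) (ξ : Hist A Q) : Rule F E → Prop
  | fail : Fails X tmpl tval fval ξ .fail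
  | condT {φ R0 R1} : GVal X tmpl tval fval ξ φ true → Fails X tmpl tval fval ξ R0 →
      Fails X tmpl tval fval ξ (.cond φ R0 R1)
  | condF {φ R0 R1} : GVal X tmpl tval fval ξ φ false → Fails X tmpl tval fval ξ R1 →
      Fails X tmpl tval fval ξ (.cond φ R0 R1)
  | parFail {Rs R} : Final X tmpl tval fval ξ (.par Rs) → R ∈ Rs →
      Fails X tmpl tval fval ξ R → Fails X tmpl tval fval ξ (.par Rs)
  | parClash {Rs} : Final X tmpl tval fval ξ (.par Rs) →
      Clash X tmpl tval fval ξ (.par Rs) → Fails X tmpl tval fval ξ (.par Rs)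

/-- ξ succeeds for R in X. -/
inductive Succeeds {A Q F E : Type*} (X : F → List A → A) (tmpl : E → List A → Q)
    (tval fval : A) (ξ : Hist A Q) : Rule F E → Prop
  | upd {f ts t0} : (∀ t ∈ t0 :: ts, HasVal X tmpl ξ.ans t) →
      Succeeds X tmpl tval fval ξ (.upd f ts t0)
  | issue {e ts} : (∀ t ∈ ts, HasVal X tmpl ξ.ans t) →
      Succeeds X tmpl tval fval ξ (.issue e ts)
  | condT {φ R0 R1} : GVal X tmpl tval fval ξ φ true → Succeeds X tmpl tval fval ξ R0 →
      Succeeds X tmpl tval fval ξ (.cond φ R0 R1)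
  | condF {φ R0 R1} : GVal X tmpl tval fval ξ φ false → Succeeds X tmpl tval fval ξ R1 →
      Succeeds X tmpl tval fval ξ (.cond φ R0 R1)
  | par {Rs} : (∀ R ∈ Rs, Succeeds X tmpl tval fval ξ R) →
      ¬ Clash X tmpl tval fval ξ (.par Rs) → Succeeds X tmpl tval fval ξ (.par Rs)

/-- Queries caused by a rule, ξ ⊢_X^R q. -/
inductive RCauses {A Q F E : Type*} (X : F → List A → A) (tmpl : E → List A → Q)
    (tval fval : A) (ξ : Hist A Q) : Rule F E → Q → Prop
  | updArg {f ts t0 t' q} : t' ∈ t0 :: ts → Causes X tmpl ξ.ans t' q →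
      RCauses X tmpl tval fval ξ (.upd f ts t0) q
  | issueArg {e ts t' q} : t' ∈ ts → Causes X tmpl ξ.ans t' q →
      RCauses X tmpl tval fval ξ (.issue e ts) q
  | issueQ {e : E} {ts as} : ts.length = as.length →
      (∀ p ∈ ts.zip as, Val X tmpl ξ.ans p.1 p.2) → ξ.ans (tmpl e as) = none →
      RCauses X tmpl tval fval ξ (.issue e ts) (tmpl e as)
  | condG {φ R0 R1 q} : (¬ ∃ b, GVal X tmpl tval fval ξ φ b) →
      GCauses X tmpl tval fval ξ φ q → RCauses X tmpl tval fval ξ (.cond φ R0 R1) q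
  | condT {φ R0 R1 q} : GVal X tmpl tval fval ξ φ true → RCauses X tmpl tval fval ξ R0 q →
      RCauses X tmpl tval fval ξ (.cond φ R0 R1) q
  | condF {φ R0 R1 q} : GVal X tmpl tval fval ξ φ false → RCauses X tmpl tval fval ξ R1 q →
      RCauses X tmpl tval fval ξ (.cond φ R0 R1) q
  | par {Rs R q} : R ∈ Rs → RCauses X tmpl tval fval ξ R q →
      RCauses X tmpl tval fval ξ (.par Rs) q

section Aux

variable {A Q F E : Type*} {X : F → List A → A} {tmpl : E → List A → Q}
  {tval fval : A}

lemma ans_mono {η ξ : Hist A Q} (hseg : InitSeg η ξ) {x : Q} {a : A}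
    (h : η.ans x = some a) : ξ.ans x = some a := by
  rw [← hseg.1 x (by simp [h])]; exact h

lemma val_mono {η ξ : Hist A Q} (hseg : InitSeg η ξ) {t : Term F E} {a : A}
    (h : Val X tmpl η.ans t a) : Val X tmpl ξ.ans t a := by
  induction h with
  | func hlen hvals ih => exact .func hlen ih
  | ext hlen hvals hans ih => exact .ext hlen ih (ans_mono hseg hans)

lemma hasval_mono {η ξ : Hist A Q} (hseg : InitSeg η ξ) {t : Term F E}
    (h : HasVal X tmpl η.ans t) : HasVal X tmpl ξ.ans t :=
  ⟨h.choose, val_mono hseg h.choose_spec⟩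

lemma zip_vals_eq {ans : Q → Option A} {ts : List (Term F E)} {as as' : List A}
    (h1 : ts.length = as.length) (h2 : ts.length = as'.length)
    (ih : ∀ p ∈ ts.zip as, ∀ b, Val X tmpl ans p.1 b → p.2 = b)
    (hv : ∀ p ∈ ts.zip as', Val X tmpl ans p.1 p.2) : as = as' := by
  apply List.ext_getElem (by omega)
  intro i hi hi'
  have hit : i < ts.length := by omega
  have hm : (ts[i], as[i]) ∈ ts.zip as := by
    have h' : (ts.zip as)[i]'(by simp [List.length_zip]; omega) = (ts[i], as[i]) := by
      simp [List.getElem_zip]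
    rw [← h']; exact List.getElem_mem _
  have hm' : (ts[i], as'[i]) ∈ ts.zip as' := by
    have h' : (ts.zip as')[i]'(by simp [List.length_zip]; omega) = (ts[i], as'[i]) := by
      simp [List.getElem_zip]
    rw [← h']; exact List.getElem_mem _
  exact ih _ hm _ (hv _ hm')

lemma val_fun {ans : Q → Option A} {t : Term F E} {a a' : A}
    (h : Val X tmpl ans t a) (h' : Val X tmpl ans t a') : a = a' := by
  induction h generalizing a' with
  | @func f ts as hlen hvals ih =>
      cases h' with
      | func hlen' hvals' =>
          have := zip_vals_eq hlen hlen' ih hvals'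
          rw [this]
  | @ext e ts as a hlen hvals hans ih =>
      cases h' with
      | ext hlen' hvals' hans' =>
          have heq := zip_vals_eq hlen hlen' ih hvals'
          subst heq
          rw [hans] at hans'
          exact Option.some_injective _ hans'

lemma val_rev {η ξ : Hist A Q} (hseg : InitSeg η ξ) {t : Term F E} {a : A}
    (hv : HasVal X tmpl η.ans t) (h : Val X tmpl ξ.ans t a) :
    Val X tmpl η.ans t a := by
  obtain ⟨a', hv⟩ := hv
  have := val_fun (val_mono hseg hv) h
  exact this ▸ hv

lemma zip_val_rev {η ξ : Hist A Q} (hseg : InitSeg η ξ)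
    {ts : List (Term F E)} {as : List A}
    (hv : ∀ t ∈ ts, HasVal X tmpl η.ans t)
    (h : ∀ p ∈ ts.zip as, Val X tmpl ξ.ans p.1 p.2) :
    ∀ p ∈ ts.zip as, Val X tmpl η.ans p.1 p.2 := by
  rintro ⟨t, b⟩ hp
  exact val_rev hseg (hv t (List.of_mem_zip hp).1) (h _ hp)

lemma initseg_trans {ζ η ξ : Hist A Q} (h1 : InitSeg ζ η) (h2 : InitSeg η ξ) :
    InitSeg ζ ξ := by
  obtain ⟨a1, b1, c1⟩ := h1; obtain ⟨a2, b2, c2⟩ := h2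
  refine ⟨?_, ?_, ?_⟩
  · intro x hx
    rw [a1 x hx]; exact a2 x (by rw [← a1 x hx]; exact hx)
  · intro x y hxy hy
    have hyη : η.ans y ≠ none := by rw [← a1 y hy]; exact hy
    have hxη : η.ans x ≠ none := b2 x y hxy hyη
    exact b1 x y ((c2 x y).2 ⟨hxy, hxη, hyη⟩) hy
  · intro x y
    constructor
    · intro h
      obtain ⟨hle, hx, hy⟩ := (c1 x y).1 h
      exact ⟨((c2 x y).1 hle).1, hx, hy⟩
    · rintro ⟨hle, hx, hy⟩
      have hxη : η.ans x ≠ none := by rw [← a1 x hx]; exact hx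
      have hyη : η.ans y ≠ none := by rw [← a1 y hy]; exact hy
      exact (c1 x y).2 ⟨(c2 x y).2 ⟨hle, hxη, hyη⟩, hx, hy⟩

lemma initseg_of_subset {ζ η ξ : Hist A Q} (h1 : InitSeg ζ ξ) (h2 : InitSeg η ξ)
    (hsub : ∀ x, ζ.ans x ≠ none → η.ans x ≠ none) : InitSeg ζ η := by
  obtain ⟨a1, b1, c1⟩ := h1; obtain ⟨a2, b2, c2⟩ := h2
  refine ⟨?_, ?_, ?_⟩
  · intro x hx
    rw [a1 x hx, a2 x (hsub x hx)]
  · intro x y hxy hy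
    exact b1 x y ((c2 x y).1 hxy).1 hy
  · intro x y
    constructor
    · intro h
      obtain ⟨hle, hx, hy⟩ := (c1 x y).1 h
      exact ⟨(c2 x y).2 ⟨hle, hsub x hx, hsub y hy⟩, hx, hy⟩
    · rintro ⟨hle, hx, hy⟩
      exact (c1 x y).2 ⟨((c2 x y).1 hle).1, hx, hy⟩

lemma initseg_comp {ζ η ξ : Hist A Q} (hξ : IsHistory ξ)
    (h1 : InitSeg ζ ξ) (h2 : InitSeg η ξ) : InitSeg ζ η ∨ InitSeg η ζ := by
  by_cases hsub : ∀ x, ζ.ans x ≠ none → η.ans x ≠ none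
  · exact Or.inl (initseg_of_subset h1 h2 hsub)
  · push_neg at hsub
    obtain ⟨x, hxζ, hxη⟩ := hsub
    right
    apply initseg_of_subset h2 h1
    intro y hy
    have hxξ : ξ.ans x ≠ none := by rw [← h1.1 x hxζ]; exact hxζ
    have hyξ : ξ.ans y ≠ none := by rw [← h2.1 y hy]; exact hy
    rcases hξ.2.2.2 x y hxξ hyξ with hle | hle
    · exact absurd (h2.2.1 x y hle hy) (by simp [hxη])
    · exact h1.2.1 y x hle hxζ

lemma gval_mono {η ξ : Hist A Q} (hη : IsHistory η) (hξ : IsHistory ξ)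
    (hseg : InitSeg η ξ) {φ : Guard F E} {b : Bool}
    (h : GVal X tmpl tval fval η φ b) : GVal X tmpl tval fval ξ φ b := by
  induction h with
  | @tmT t h => exact .tmT (val_mono hseg h)
  | @tmF t h => exact .tmF (val_mono hseg h)
  | @timingT₁ s t hs ht =>
      by_cases hξt : HasVal X tmpl ξ.ans t
      · refine .timingT₂ (hasval_mono hseg hs) hξt ?_
        intro ζ hζ hζseg hζt
        rcases initseg_comp hξ hζseg hseg with hc | hc
        · exact absurd (hasval_mono hc hζt) ht
        · exact hasval_mono hc hs
      · exact .timingT₁ (hasval_mono hseg hs) hξt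
  | @timingT₂ s t hs ht hall =>
      refine .timingT₂ (hasval_mono hseg hs) (hasval_mono hseg ht) ?_
      intro ζ hζ hζseg hζt
      rcases initseg_comp hξ hζseg hseg with hc | hc
      · exact hall ζ hζ hc hζt
      · exact hasval_mono hc hs
  | @timingF₁ s t ht hs =>
      by_cases hξs : HasVal X tmpl ξ.ans s
      · exact .timingF₂ hξs (hasval_mono hseg ht) ⟨η, hη, hseg, ht, hs⟩
      · exact .timingF₁ (hasval_mono hseg ht) hξs
  | @timingF₂ s t hs ht hex =>
      obtain ⟨ζ, hζ, hζseg, h3, h4⟩ := hex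
      exact .timingF₂ (hasval_mono hseg hs) (hasval_mono hseg ht)
        ⟨ζ, hζ, initseg_trans hζseg hseg, h3, h4⟩
  | kandT _ _ ih1 ih2 => exact .kandT ih1 ih2
  | kandF₀ _ ih => exact .kandF₀ ih
  | kandF₁ _ ih => exact .kandF₁ ih
  | korF _ _ ih1 ih2 => exact .korF ih1 ih2
  | korT₀ _ ih => exact .korT₀ ih
  | korT₁ _ ih => exact .korT₁ ih
  | knot _ ih => exact .knot ih

lemma gval_fun (htf : tval ≠ fval) {ξ : Hist A Q} {φ : Guard F E} {b b' : Bool}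
    (hg : GoodGuard X tmpl tval fval φ)
    (h : GVal X tmpl tval fval ξ φ b) (h' : GVal X tmpl tval fval ξ φ b') :
    b = b' := by
  induction hg generalizing b b' with
  | @tm t hbool =>
      cases h with
      | tmT h => cases h' with
        | tmT h' => rfl
        | tmF h' => exact absurd (val_fun h h') htf
      | tmF h => cases h' with
        | tmT h' => exact absurd (val_fun h' h) htf
        | tmF h' => rfl
  | @timing s t =>
      cases h with
      | timingT₁ hs ht => cases h' with
        | timingT₁ _ _ => rfl
        | timingT₂ _ _ _ => rfl
        | timingF₁ ht' hs' => exact absurd hs hs'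
        | timingF₂ hs' ht' _ => exact absurd ht' ht
      | timingT₂ hs ht hall => cases h' with
        | timingT₁ _ _ => rfl
        | timingT₂ _ _ _ => rfl
        | timingF₁ ht' hs' => exact absurd hs hs'
        | timingF₂ hs' ht' hex =>
            obtain ⟨ζ, hζ, hζseg, h3, h4⟩ := hex
            exact absurd (hall ζ hζ hζseg h3) h4
      | timingF₁ ht hs => cases h' with
        | timingF₁ _ _ => rfl
        | timingF₂ _ _ _ => rfl
        | timingT₁ hs' ht' => exact absurd hs' hs
        | timingT₂ hs' ht' _ => exact absurd hs' hs
      | timingF₂ hs ht hex => cases h' with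
        | timingF₁ _ _ => rfl
        | timingF₂ _ _ _ => rfl
        | timingT₁ hs' ht' => exact absurd ht ht'
        | timingT₂ hs' ht' hall =>
            obtain ⟨ζ, hζ, hζseg, h3, h4⟩ := hex
            exact absurd (hall ζ hζ hζseg h3) h4
  | kand hgφ hgψ ihφ ihψ =>
      cases h with
      | kandT h1 h2 => cases h' with
        | kandT _ _ => rfl
        | kandF₀ h1' => exact ihφ h1 h1'
        | kandF₁ h2' => exact ihψ h2 h2'
      | kandF₀ h1 => cases h' with
        | kandT h1' _ => exact ihφ h1 h1'
        | kandF₀ _ => rfl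
        | kandF₁ _ => rfl
      | kandF₁ h2 => cases h' with
        | kandT _ h2' => exact ihψ h2 h2'
        | kandF₀ _ => rfl
        | kandF₁ _ => rfl
  | kor hgφ hgψ ihφ ihψ =>
      cases h with
      | korF h1 h2 => cases h' with
        | korF _ _ => rfl
        | korT₀ h1' => exact ihφ h1 h1'
        | korT₁ h2' => exact ihψ h2 h2'
      | korT₀ h1 => cases h' with
        | korF h1' _ => exact ihφ h1 h1'
        | korT₀ _ => rfl
        | korT₁ _ => rfl
      | korT₁ h2 => cases h' with
        | korF _ h2' => exact ihψ h2 h2'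
        | korT₀ _ => rfl
        | korT₁ _ => rfl
  | knot hgφ ih =>
      cases h with
      | knot h1 => cases h' with
        | knot h1' => rw [ih h1 h1']

lemma final_mono {η ξ : Hist A Q} (hη : IsHistory η) (hξ : IsHistory ξ)
    (hseg : InitSeg η ξ) {R : Rule F E}
    (h : Final X tmpl tval fval η R) : Final X tmpl tval fval ξ R := by
  induction h with
  | upd h => exact .upd fun t ht => hasval_mono hseg (h t ht)
  | issue h => exact .issue fun t ht => hasval_mono hseg (h t ht)
  | fail => exact .fail
  | condT hg _ ih => exact .condT (gval_mono hη hξ hseg hg) ih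
  | condF hg _ ih => exact .condF (gval_mono hη hξ hseg hg) ih
  | par _ ih => exact .par ih

lemma updset_mono {η ξ : Hist A Q} (hη : IsHistory η) (hξ : IsHistory ξ)
    (hseg : InitSeg η ξ) {R : Rule F E} {u : F × List A × A}
    (h : UpdSet X tmpl tval fval η R u) : UpdSet X tmpl tval fval ξ R u := by
  induction h with
  | upd hlen hvals hv =>
      exact .upd hlen (fun p hp => val_mono hseg (hvals p hp)) (val_mono hseg hv)
  | condT hg _ ih => exact .condT (gval_mono hη hξ hseg hg) ih
  | condF hg _ ih => exact .condF (gval_mono hη hξ hseg hg) ih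
  | par hm _ ih => exact .par hm ih

lemma succeeds_final {ξ : Hist A Q} {R : Rule F E}
    (h : Succeeds X tmpl tval fval ξ R) : Final X tmpl tval fval ξ R := by
  induction h with
  | upd h => exact .upd h
  | issue h => exact .issue h
  | condT hg _ ih => exact .condT hg ih
  | condF hg _ ih => exact .condF hg ih
  | par _ _ ih => exact .par ih

lemma updset_rev (htf : tval ≠ fval) {η ξ : Hist A Q} (hη : IsHistory η)
    (hξ : IsHistory ξ) (hseg : InitSeg η ξ) {R : Rule F E} {u : F × List A × A}
    (h : UpdSet X tmpl tval fval ξ R u) (hR : GoodRule X tmpl tval fval R)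
    (hfin : Final X tmpl tval fval η R) : UpdSet X tmpl tval fval η R u := by
  induction h with
  | upd hlen hvals hv =>
      cases hfin with
      | upd hf =>
          exact .upd hlen
            (zip_val_rev hseg (fun t ht => hf t (List.mem_cons_of_mem _ ht)) hvals)
            (val_rev hseg (hf _ (List.mem_cons_self (a := _) (l := _))) hv)
  | condT hg _ ih =>
      cases hR with
      | cond hφ h0 h1 =>
          cases hfin with
          | condT hgη hf => exact .condT hgη (ih h0 hf)
          | condF hgη hf =>
              exact absurd (gval_fun htf hφ hg (gval_mono hη hξ hseg hgη))
                (by simp)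
  | condF hg _ ih =>
      cases hR with
      | cond hφ h0 h1 =>
          cases hfin with
          | condF hgη hf => exact .condF hgη (ih h1 hf)
          | condT hgη hf =>
              exact absurd (gval_fun htf hφ hg (gval_mono hη hξ hseg hgη))
                (by simp)
  | par hm _ ih =>
      cases hR with
      | par hall =>
          cases hfin with
          | par hfall => exact .par hm (ih (hall _ hm) (hfall _ hm))

lemma succeeds_mono (htf : tval ≠ fval) {η ξ : Hist A Q} (hη : IsHistory η)
    (hξ : IsHistory ξ) (hseg : InitSeg η ξ) {R : Rule F E}
    (h : Succeeds X tmpl tval fval η R) (hR : GoodRule X tmpl tval fval R) :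
    Succeeds X tmpl tval fval ξ R := by
  induction h with
  | upd h => exact .upd fun t ht => hasval_mono hseg (h t ht)
  | issue h => exact .issue fun t ht => hasval_mono hseg (h t ht)
  | condT hg _ ih =>
      cases hR with
      | cond hφ h0 h1 => exact .condT (gval_mono hη hξ hseg hg) (ih h0)
  | condF hg _ ih =>
      cases hR with
      | cond hφ h0 h1 => exact .condF (gval_mono hη hξ hseg hg) (ih h1)
  | @par Rs hall hnc ih =>
      cases hR with
      | par hg =>
          refine .par (fun R hm => ih R hm (hg R hm)) ?_
          rintro ⟨f, as, a, a', h1, h2, hne⟩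
          have hfin : Final X tmpl tval fval η (.par Rs) :=
            .par fun R hm => succeeds_final (hall R hm)
          exact hnc ⟨f, as, a, a',
            updset_rev htf hη hξ hseg h1 (.par hg) hfin,
            updset_rev htf hη hξ hseg h2 (.par hg) hfin, hne⟩

lemma fails_mono (htf : tval ≠ fval) {η ξ : Hist A Q} (hη : IsHistory η)
    (hξ : IsHistory ξ) (hseg : InitSeg η ξ) {R : Rule F E}
    (h : Fails X tmpl tval fval η R) (hR : GoodRule X tmpl tval fval R) :
    Fails X tmpl tval fval ξ R := by
  induction h with
  | fail => exact .fail
  | condT hg _ ih =>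
      cases hR with
      | cond hφ h0 h1 => exact .condT (gval_mono hη hξ hseg hg) (ih h0)
  | condF hg _ ih =>
      cases hR with
      | cond hφ h0 h1 => exact .condF (gval_mono hη hξ hseg hg) (ih h1)
  | parFail hfin hm _ ih =>
      cases hR with
      | par hg =>
          exact .parFail (final_mono hη hξ hseg hfin) hm (ih (hg _ hm))
  | parClash hfin hc =>
      obtain ⟨f, as, a, a', h1, h2, hne⟩ := hc
      exact .parClash (final_mono hη hξ hseg hfin)
        ⟨f, as, a, a', updset_mono hη hξ hseg h1, updset_mono hη hξ hseg h2, hne⟩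

end Aux

/-- monotonicity of rule semantics under initial segments:
finality, success and failure persist, and update sets only grow. -/
theorem stmt11 {A Q F E : Type*} (X : F → List A → A) (tmpl : E → List A → Q)
    (tval fval : A) (htf : tval ≠ fval)
    (η ξ : Hist A Q) (hη : IsHistory η) (hξ : IsHistory ξ) (hseg : InitSeg η ξ)
    (R : Rule F E) (hR : GoodRule X tmpl tval fval R) :
    (Final X tmpl tval fval η R → Final X tmpl tval fval ξ R) ∧
    (Succeeds X tmpl tval fval η R → Succeeds X tmpl tval fval ξ R) ∧
    (Fails X tmpl tval fval η R → Fails X tmpl tval fval ξ R) ∧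
    (∀ u, UpdSet X tmpl tval fval η R u → UpdSet X tmpl tval fval ξ R u) :=
  ⟨final_mono hη hξ hseg,
   fun h => succeeds_mono htf hη hξ hseg h hR,
   fun h => fails_mono htf hη hξ hseg h hR,
   fun _ h => updset_mono hη hξ hseg h⟩
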